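/- Let R2 > 0 and R0 < √R2. If x : [t0, T) → ℝ is a solution of ẋ(t) = R0 − R2·t² + x(t)² with x(t0) < √R2 · t0, then x(t) < √R2 · t for all t ∈ [t0, T). -/

import Mathlib

theorem stmt_1 (R2 R0 t0 T : ℝ) (hR2 : 0 < R2) (hR0 : R0 < Real.sqrt R2)
    (x : ℝ → ℝ)
    (hx : ∀ t ∈ Set.Ico t0 T,
      HasDerivWithinAt x (R0 - R2 * t ^ 2 + (x t) ^ 2) (Set.Ico t0 T) t)
    (hinit : x t0 < Real.sqrt R2 * t0) :
    ∀ t ∈ Set.Ico t0 T, x t < Real.sqrt R2 * t := by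
  set g : ℝ → ℝ := fun t => x t - Real.sqrt R2 * t with hg
  by_contra hcon
  push_neg at hcon
  obtain ⟨w, hw, hwge⟩ := hcon
  set S : Set ℝ := {t | t ∈ Set.Ico t0 T ∧ Real.sqrt R2 * t ≤ x t} with hS
  have hSne : S.Nonempty := ⟨w, hw, hwge⟩
  have hSbdd : BddBelow S := ⟨t0, fun t ht => ht.1.1⟩
  set s : ℝ := sInf S with hs
  have hst0 : t0 ≤ s := le_csInf hSne fun t ht => ht.1.1
  have hsw : s ≤ w := csInf_le hSbdd ⟨hw, hwge⟩
  have hsT : s < T := lt_of_le_of_lt hsw hw.2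
  have hsmem : s ∈ Set.Ico t0 T := ⟨hst0, hsT⟩
  -- continuity of g within Ico
  have hgc : ContinuousWithinAt g (Set.Ico t0 T) s := by
    have := ((hx s hsmem).sub ((hasDerivWithinAt_id s _).const_mul (Real.sqrt R2))).continuousWithinAt
    simpa [hg, mul_one, Pi.sub_def] using this
  -- g s ≥ 0 via closure of S
  have hscl : s ∈ closure S := csInf_mem_closure hSne hSbdd
  have hgs_ge : 0 ≤ g s := by
    have hne : (nhdsWithin s S).NeBot := mem_closure_iff_nhdsWithin_neBot.mp hscl
    have htend : Filter.Tendsto g (nhdsWithin s S) (nhds (g s)) :=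
      hgc.tendsto.mono_left (nhdsWithin_mono s fun t ht => ht.1)
    refine ge_of_tendsto htend ?_
    filter_upwards [self_mem_nhdsWithin] with t ht
    exact sub_nonneg.mpr ht.2
  -- t0 < s
  have hgt0 : g t0 < 0 := sub_neg.mpr hinit
  have ht0s : t0 < s := by
    rcases lt_or_eq_of_le hst0 with h | h
    · exact h
    · exfalso; rw [← h] at hgs_ge; linarith
  -- g < 0 on [t0, s)
  have hneg : ∀ τ ∈ Set.Ico t0 s, g τ < 0 := by
    intro τ hτ
    by_contra hge
    push_neg at hge
    have : τ ∈ S := ⟨⟨hτ.1, lt_trans hτ.2 hsT⟩, sub_nonneg.mp hge⟩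
    exact absurd (csInf_le hSbdd this) (not_le.mpr hτ.2)
  -- g s ≤ 0 via left limit
  have hfilter : nhdsWithin s (Set.Ioo t0 s) = nhdsWithin s (Set.Iio s) :=
    nhdsWithin_Ioo_eq_nhdsLT ht0s
  have hgs_le : 0 ≤ 0 := le_refl 0
  have hgs_le' : g s ≤ 0 := by
    have htend : Filter.Tendsto g (nhdsWithin s (Set.Ioo t0 s)) (nhds (g s)) :=
      hgc.tendsto.mono_left (nhdsWithin_mono s fun t ht => ⟨le_of_lt ht.1, lt_trans ht.2 hsT⟩)
    have hnb : (nhdsWithin s (Set.Ioo t0 s)).NeBot := by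
      rw [hfilter]; infer_instance
    refine le_of_tendsto htend ?_
    filter_upwards [self_mem_nhdsWithin] with t ht
    exact le_of_lt (hneg t ⟨le_of_lt ht.1, ht.2⟩)
  have hgs0 : g s = 0 := le_antisymm hgs_le' hgs_ge
  have hxs : x s = Real.sqrt R2 * s := by
    have := sub_eq_zero.mp (by simpa [hg] using hgs0)
    exact this
  -- derivative of g at s
  have hd : HasDerivWithinAt g (R0 - Real.sqrt R2) (Set.Ico t0 T) s := by
    have h1 := (hx s hsmem).sub ((hasDerivWithinAt_id s (Set.Ico t0 T)).const_mul (Real.sqrt R2))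
    have hx2 : (x s) ^ 2 = R2 * s ^ 2 := by
      rw [hxs, mul_pow, Real.sq_sqrt hR2.le]
    have : R0 - R2 * s ^ 2 + (x s) ^ 2 - Real.sqrt R2 * 1 = R0 - Real.sqrt R2 := by
      rw [hx2]; ring
    rw [← this]
    exact h1
  -- slope limit
  have hslope := hasDerivWithinAt_iff_tendsto_slope.mp hd
  have hsub : Set.Ioo t0 s ⊆ (Set.Ico t0 T) \ {s} := by
    intro τ hτ
    exact ⟨⟨le_of_lt hτ.1, lt_trans hτ.2 hsT⟩, ne_of_lt hτ.2⟩
  have htend2 : Filter.Tendsto (slope g s) (nhdsWithin s (Set.Ioo t0 s))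
      (nhds (R0 - Real.sqrt R2)) :=
    hslope.mono_left (nhdsWithin_mono s hsub)
  have hnb : (nhdsWithin s (Set.Ioo t0 s)).NeBot := by
    rw [hfilter]; infer_instance
  have hge0 : 0 ≤ R0 - Real.sqrt R2 := by
    refine ge_of_tendsto htend2 ?_
    filter_upwards [self_mem_nhdsWithin] with τ hτ
    have hτneg : g τ < 0 := hneg τ ⟨le_of_lt hτ.1, hτ.2⟩
    rw [slope_def_field, hgs0, sub_zero]
    exact le_of_lt (div_pos_of_neg_of_neg hτneg (sub_neg.mpr hτ.2))
  linarith
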